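/- Let M be symmetric positive definite and K symmetric positive semidefinite in ℝ^{m×m}, and let Ā ∈ ℝ^{s×s} be a matrix all of whose eigenvalues have positive real part. Then for any Δt > 0, the matrix I_s ⊗ M + Δt² (Ā ⊗ K) is invertible. -/

import Mathlib

open Matrix
open scoped Kronecker

-- key scalar lemma
lemma key_det (s : ℕ) (Abar : Matrix (Fin s) (Fin s) ℝ)
    (hAbar : ∀ μ : ℂ, μ ∈ spectrum ℂ (Abar.map (algebraMap ℝ ℂ)) → 0 < μ.re)
    {c : ℝ} (hc : 0 ≤ c) : ((1 : Matrix (Fin s) (Fin s) ℝ) + c • Abar).det ≠ 0 := by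
  rcases hc.eq_or_lt with h0 | hc
  · rw [← h0]; simp
  · intro hdet
    set f := algebraMap ℝ ℂ with hf
    set A' := Abar.map f with hA'
    have hmap : ((1 : Matrix (Fin s) (Fin s) ℝ) + c • Abar).map f
        = 1 + (c : ℂ) • A' := by
      ext i j
      by_cases h : i = j <;>
        simp [Matrix.map_apply, Matrix.one_apply, h, hf, hA']
    have hdetC : (1 + (c : ℂ) • A').det = 0 := by
      rw [← hmap, show ((1 : Matrix (Fin s) (Fin s) ℝ) + c • Abar).map f = f.mapMatrix (1 + c • Abar) from rfl, ← RingHom.map_det, hdet, map_zero]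
    set μ : ℂ := ((-(c⁻¹) : ℝ) : ℂ) with hμ
    have hmem : μ ∈ spectrum ℂ A' := by
      rw [spectrum.mem_iff]
      have heq : algebraMap ℂ (Matrix (Fin s) (Fin s) ℂ) μ - A'
          = (-(c⁻¹ : ℂ)) • (1 + (c : ℂ) • A') := by
        have hcne : (c : ℂ) ≠ 0 := by exact_mod_cast hc.ne'
        rw [Matrix.algebraMap_eq_diagonal, smul_add, smul_smul, neg_mul,
          inv_mul_cancel₀ hcne]
        ext i j
        by_cases h : i = j <;>
          simp [Matrix.diagonal_apply, Matrix.one_apply, h, hμ, Pi.algebraMap_apply, sub_eq_add_neg]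
      rw [heq, Matrix.isUnit_iff_isUnit_det, Matrix.det_smul, hdetC, mul_zero]
      exact not_isUnit_zero
    have := hAbar μ hmem
    rw [hμ, Complex.ofReal_re] at this
    have hpos : (0:ℝ) < c⁻¹ := inv_pos.mpr hc
    linarith

-- kronecker with diagonal second factor
lemma kron_diag {s m : ℕ} (A : Matrix (Fin s) (Fin s) ℝ) (d : Fin m → ℝ) :
    A ⊗ₖ diagonal d = blockDiagonal (fun k => d k • A) := by
  ext ⟨i, k⟩ ⟨j, l⟩
  simp [Matrix.kroneckerMap_apply, Matrix.blockDiagonal_apply, Matrix.diagonal_apply,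
    mul_comm]

/-- If `M` is SPD, `K` symmetric PSD, and all eigenvalues of `Ā` have positive real
part, then for any `Δt > 0` the matrix `I ⊗ M + Δt² (Ā ⊗ K)` is invertible. -/
theorem stmt9 (s m : ℕ) (M K : Matrix (Fin m) (Fin m) ℝ)
    (Abar : Matrix (Fin s) (Fin s) ℝ)
    (hM : M.PosDef) (hK : K.PosSemidef)
    (hAbar : ∀ μ : ℂ, μ ∈ spectrum ℂ (Abar.map (algebraMap ℝ ℂ)) → 0 < μ.re)
    (Δt : ℝ) (hΔt : 0 < Δt) :
    IsUnit ((1 : Matrix (Fin s) (Fin s) ℝ) ⊗ₖ M + (Δt ^ 2) • (Abar ⊗ₖ K)) := by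
  have hMps := hM.posSemidef
  have hSex : ∃ S : Matrix (Fin m) (Fin m) ℝ, S.PosSemidef ∧ S * S = M := by
    open scoped MatrixOrder in
    exact ⟨CFC.sqrt M, Matrix.nonneg_iff_posSemidef.mp (CFC.sqrt_nonneg M),
      CFC.sqrt_mul_sqrt_self M (Matrix.nonneg_iff_posSemidef.mpr hMps)⟩
  obtain ⟨S, hSps, hSS⟩ := hSex
  have hdetS : S.det ≠ 0 := by
    intro h
    have : S.det * S.det = M.det := by rw [← Matrix.det_mul, hSS]
    rw [h, mul_zero] at this
    exact hM.det_pos.ne' this.symm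
  have hdetSU : IsUnit S.det := isUnit_iff_ne_zero.mpr hdetS
  have hSinv1 : S * S⁻¹ = 1 := Matrix.mul_nonsing_inv _ hdetSU
  have hSinv2 : S⁻¹ * S = 1 := Matrix.nonsing_inv_mul _ hdetSU
  set C := S⁻¹ * K * S⁻¹ with hCdef
  have hCps : C.PosSemidef := by
    have h := hK.mul_mul_conjTranspose_same S⁻¹
    rwa [Matrix.conjTranspose_nonsing_inv, hSps.isHermitian.eq] at h
  have hC : C.IsHermitian := hCps.1
  set U : Matrix (Fin m) (Fin m) ℝ := (hC.eigenvectorUnitary : Matrix (Fin m) (Fin m) ℝ) with hUdef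
  have hUmem := hC.eigenvectorUnitary.2
  have hU1 : star U * U = 1 := hUmem.1
  have hU2 : U * star U = 1 := hUmem.2
  set d : Fin m → ℝ := RCLike.ofReal ∘ hC.eigenvalues with hddef
  have hd : ∀ k, 0 ≤ d k := fun k => by
    simpa [hddef] using hCps.eigenvalues_nonneg k
  have hspec : C = U * diagonal d * star U := hC.spectral_theorem
  -- factor out S
  have hfac1 : (1 : Matrix (Fin s) (Fin s) ℝ) ⊗ₖ M + (Δt ^ 2) • (Abar ⊗ₖ K)
      = (1 ⊗ₖ S) * (1 + (Δt ^ 2) • (Abar ⊗ₖ C)) * (1 ⊗ₖ S) := by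
    have h1 : ((1 : Matrix (Fin s) (Fin s) ℝ) ⊗ₖ S) * (1 ⊗ₖ S) = 1 ⊗ₖ M := by
      rw [← Matrix.mul_kronecker_mul, mul_one, hSS]
    have h2 : ((1 : Matrix (Fin s) (Fin s) ℝ) ⊗ₖ S) * (Abar ⊗ₖ C) * (1 ⊗ₖ S)
        = Abar ⊗ₖ K := by
      rw [← Matrix.mul_kronecker_mul, ← Matrix.mul_kronecker_mul, one_mul, mul_one,
        hCdef]
      congr 1
      simp only [← mul_assoc]
      rw [hSinv1, one_mul, mul_assoc, hSinv2, mul_one]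
    rw [mul_add, add_mul, mul_one, h1, mul_smul_comm, smul_mul_assoc, h2]
  -- factor out U
  have hfac2 : (1 : Matrix (Fin s × Fin m) (Fin s × Fin m) ℝ) + (Δt ^ 2) • (Abar ⊗ₖ C)
      = (1 ⊗ₖ U) * (1 + (Δt ^ 2) • (Abar ⊗ₖ diagonal d)) * (1 ⊗ₖ star U) := by
    have h1 : ((1 : Matrix (Fin s) (Fin s) ℝ) ⊗ₖ U) * (1 ⊗ₖ star U) = 1 := by
      rw [← Matrix.mul_kronecker_mul, mul_one, hU2, Matrix.one_kronecker_one]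
    have h2 : ((1 : Matrix (Fin s) (Fin s) ℝ) ⊗ₖ U) * (Abar ⊗ₖ diagonal d) * (1 ⊗ₖ star U)
        = Abar ⊗ₖ C := by
      rw [← Matrix.mul_kronecker_mul, ← Matrix.mul_kronecker_mul, one_mul, mul_one, ← hspec]
    rw [mul_add, add_mul, mul_one, h1, mul_smul_comm, smul_mul_assoc, h2]
  rw [Matrix.isUnit_iff_isUnit_det, isUnit_iff_ne_zero, hfac1, Matrix.det_mul,
    Matrix.det_mul]
  have hdet1S : ((1 : Matrix (Fin s) (Fin s) ℝ) ⊗ₖ S).det ≠ 0 := by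
    rw [Matrix.det_kronecker]
    simp [pow_ne_zero, hdetS]
  refine mul_ne_zero (mul_ne_zero hdet1S ?_) hdet1S
  rw [hfac2, Matrix.det_mul, Matrix.det_mul]
  have hUdet : ((1 : Matrix (Fin s) (Fin s) ℝ) ⊗ₖ U).det
      * ((1 : Matrix (Fin s) (Fin s) ℝ) ⊗ₖ star U).det = 1 := by
    rw [← Matrix.det_mul, ← Matrix.mul_kronecker_mul, mul_one, hU2,
      Matrix.one_kronecker_one, Matrix.det_one]
  refine mul_ne_zero (mul_ne_zero (left_ne_zero_of_mul_eq_one hUdet) ?_)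
    (right_ne_zero_of_mul_eq_one hUdet)
  -- block diagonal
  rw [kron_diag]
  have hbd : (1 : Matrix (Fin s × Fin m) (Fin s × Fin m) ℝ)
      + (Δt ^ 2) • blockDiagonal (fun k => d k • Abar)
      = blockDiagonal (fun k => 1 + (Δt ^ 2 * d k) • Abar) := by
    ext ⟨i, k⟩ ⟨j, l⟩
    by_cases h : k = l
    · subst h
      simp [Matrix.blockDiagonal_apply, Matrix.one_apply, Prod.ext_iff, mul_assoc]
    · simp [Matrix.blockDiagonal_apply, Matrix.one_apply, Prod.ext_iff, h]
  rw [hbd, Matrix.det_blockDiagonal]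
  exact Finset.prod_ne_zero_iff.mpr fun k _ =>
    key_det s Abar hAbar (mul_nonneg (sq_nonneg Δt) (hd k))
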